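/- arXiv:1312.4387 — 2 statements merged into one kernel-verified Lean document; each statement's English description precedes it below -/
import Mathlib

section
/- Let R be a principal ideal domain, G an R-module, X a closed R-orientable topological manifold of dimension n, E and F real or complex vector bundles over X, L : E → F a bundle morphism, and c a characteristic class with values in H^k(·;G). If c(E) − c(F) ∉ im β^k ⊂ H^k(X;G), then the covering dimension of Σ(L) satisfies dim Σ(L) ≥ n − k. -/
set_option autoImplicit false

noncomputable section

open Bundle Set Module

/-- `HasCovDimLE Y m` : every finite open cover of `Y` has a finite open refinement in which
no point is included in more than `m + 1` elements. -/
def HasCovDimLE (Y : Type) [TopologicalSpace Y] (m : ℕ) : Prop :=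
  ∀ U : Finset (Set Y), (∀ u ∈ U, IsOpen u) → ⋃₀ (U : Set (Set Y)) = Set.univ →
    ∃ V : Finset (Set Y), (∀ v ∈ V, IsOpen v) ∧ ⋃₀ (V : Set (Set Y)) = Set.univ ∧
      (∀ v ∈ V, ∃ u ∈ U, v ⊆ u) ∧
      ∀ y : Y, {v ∈ (V : Set (Set Y)) | y ∈ v}.ncard ≤ m + 1

/-- The covering dimension of a topological space, as an element of `ℕ∞` (`⊤` if no finite
`m` works). -/
def covDim (Y : Type) [TopologicalSpace Y] : ℕ∞ :=
  sInf {d : ℕ∞ | ∃ m : ℕ, d = (m : ℕ∞) ∧ HasCovDimLE Y m}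

/-- The underlying graded groups of: relative singular homology `H_k(Y, A; R)` (with
`H_k(Y; R) = H_k(Y, ∅; R)`), singular cohomology `H^k(Y; G)`, Čech cohomology `Ȟ^k(Y; R)`
and the `Ext`-term `Ext¹_R(H_{k-1}(Y; R), G)` of the universal coefficient theorem. -/
structure CohomologyData (R : Type) [CommRing R] (G : Type) [AddCommGroup G] [Module R G] where
  /-- relative singular homology `H_k(Y, A; R)` -/
  Hrel : ∀ (Y : Type) [TopologicalSpace Y], Set Y → ℤ → Type
  instHrelAdd : ∀ (Y : Type) [TopologicalSpace Y] (A : Set Y) (k : ℤ), AddCommGroup (Hrel Y A k)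
  instHrelMod : ∀ (Y : Type) [TopologicalSpace Y] (A : Set Y) (k : ℤ), Module R (Hrel Y A k)
  /-- singular cohomology `H^k(Y; G)` -/
  Hco : ∀ (Y : Type) [TopologicalSpace Y], ℤ → Type
  instHcoAdd : ∀ (Y : Type) [TopologicalSpace Y] (k : ℤ), AddCommGroup (Hco Y k)
  /-- Čech cohomology `Ȟ^k(Y; R)` -/
  Hcech : ∀ (Y : Type) [TopologicalSpace Y], ℤ → Type
  instHcechAdd : ∀ (Y : Type) [TopologicalSpace Y] (k : ℤ), AddCommGroup (Hcech Y k)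
  /-- the group `Ext¹_R(H_{k-1}(Y; R), G)` appearing in the universal coefficient theorem -/
  ExtUCT : ∀ (Y : Type) [TopologicalSpace Y], ℤ → Type
  instExtAdd : ∀ (Y : Type) [TopologicalSpace Y] (k : ℤ), AddCommGroup (ExtUCT Y k)

attribute [instance] CohomologyData.instHrelAdd CohomologyData.instHrelMod
  CohomologyData.instHcoAdd CohomologyData.instHcechAdd CohomologyData.instExtAdd

/-- An axiomatization of the package consisting of singular homology of pairs (with
coefficients in a PID `R`), singular cohomology (with coefficients in an `R`-module `G`) and
Čech cohomology (with coefficients in `R`), together with: functoriality, the Kronecker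
pairing `α` (written `pair`, `α^k(η)(ξ) = ⟨η, ξ⟩`) and its naturality, the universal
coefficient exact sequence
`0 → Ext¹_R(H_{k-1}(Y;R), G) →^{β^k} H^k(Y;G) →^{α^k} Hom_R(H_k(Y;R), G) → 0`
(exactness at `H^k` and vanishing of the `Ext`-term on free homology), the homology long
exact sequence of a pair (the part `im j_* = ker π_*`), and the fact that non-vanishing of
`Ȟ^m` of a compact Hausdorff space forces its covering dimension to be at least `m`.
All of these are classical facts about the (co)homology of topological spaces; they are the
only properties used in the paper. -/
structure Theory (R : Type) [CommRing R] [IsDomain R] [IsPrincipalIdealRing R]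
    (G : Type) [AddCommGroup G] [Module R G] extends CohomologyData R G where
  /-- functoriality of relative homology for maps of pairs -/
  hmap : ∀ {Y Z : Type} [TopologicalSpace Y] [TopologicalSpace Z]
    (f : C(Y, Z)) {A : Set Y} {B : Set Z}, Set.MapsTo f A B →
    ∀ k : ℤ, Hrel Y A k →ₗ[R] Hrel Z B k
  /-- contravariant functoriality of singular cohomology -/
  cmap : ∀ {Y Z : Type} [TopologicalSpace Y] [TopologicalSpace Z]
    (f : C(Y, Z)) (k : ℤ), Hco Z k →+ Hco Y k
  cmap_id : ∀ (Y : Type) [TopologicalSpace Y] (k : ℤ) (x : Hco Y k),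
    cmap (ContinuousMap.id Y) k x = x
  /-- contravariant functoriality of Čech cohomology -/
  ccmap : ∀ {Y Z : Type} [TopologicalSpace Y] [TopologicalSpace Z]
    (f : C(Y, Z)) (k : ℤ), Hcech Z k →+ Hcech Y k
  /-- the Kronecker pairing `α^k : H^k(Y;G) → Hom_R(H_k(Y;R), G)`, `α^k(η)(ξ) = ⟨η, ξ⟩` -/
  pair : ∀ (Y : Type) [TopologicalSpace Y] (k : ℤ),
    Hco Y k →+ (Hrel Y (∅ : Set Y) k →ₗ[R] G)
  /-- naturality of the Kronecker pairing: `⟨f^*η, ξ⟩ = ⟨η, f_*ξ⟩` -/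
  pair_natural : ∀ {Y Z : Type} [TopologicalSpace Y] [TopologicalSpace Z] (f : C(Y, Z)) (k : ℤ)
    (η : Hco Z k) (ξ : Hrel Y (∅ : Set Y) k),
    pair Y k (cmap f k η) ξ = pair Z k η (hmap f (Set.mapsTo_empty _ _) k ξ)
  /-- the map `β^k : Ext¹_R(H_{k-1}(Y;R), G) → H^k(Y;G)` of the universal coefficient
  theorem -/
  betaMap : ∀ (Y : Type) [TopologicalSpace Y] (k : ℤ), ExtUCT Y k →+ Hco Y k
  /-- exactness of the universal coefficient sequence at `H^k(Y;G)`: `ker α^k = im β^k` -/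
  uct_exact : ∀ (Y : Type) [TopologicalSpace Y] (k : ℤ) (x : Hco Y k),
    pair Y k x = 0 ↔ x ∈ Set.range (betaMap Y k)
  /-- `Ext¹_R(H_{k-1}(Y;R), G)` vanishes if `H_{k-1}(Y;R)` is a free `R`-module -/
  uct_free : ∀ (Y : Type) [TopologicalSpace Y] (k : ℤ),
    Module.Free R (Hrel Y (∅ : Set Y) (k - 1)) → ∀ z : ExtUCT Y k, betaMap Y k z = 0
  /-- exactness of the long exact homology sequence of the pair `(X, X ∖ A)` at `H_k(X)`:
  `π_* ξ = 0` iff `ξ` comes from `H_k(X ∖ A)` -/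
  les_exact : ∀ (X : Type) [TopologicalSpace X] (A : Set X) (k : ℤ)
    (ξ : Hrel X (∅ : Set X) k),
    hmap (ContinuousMap.id X) (Set.mapsTo_empty _ _) k ξ = (0 : Hrel X Aᶜ k) ↔
      ∃ ζ : Hrel (↥(Aᶜ)) (∅ : Set ↥(Aᶜ)) k,
        hmap (⟨Subtype.val, continuous_subtype_val⟩ : C(↥(Aᶜ), X))
          (Set.mapsTo_empty _ _) k ζ = ξ
  /-- if the Čech cohomology `Ȟ^m(Y;R)` of a compact Hausdorff space is non-trivial
  then its covering dimension is at least `m` -/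
  dim_cech : ∀ (Y : Type) [TopologicalSpace Y] [CompactSpace Y] [T2Space Y] (m : ℕ),
    (∃ x : Hcech Y (m : ℤ), x ≠ 0) → (m : ℕ∞) ≤ covDim Y

/-- `X` is `R`-orientable (with respect to the homology theory `T`) if there is a compatible
continuous choice `o(λ)` of generators of the local homology modules
`H_n(X, X ∖ {λ}; R) ≅ R`: i.e. an open cover `{U_i}` of `X` and classes
`μ_i ∈ H_n(X, X ∖ U_i; R)` restricting to `o(λ)` for every `λ ∈ U_i`. -/
def ROrientable {R : Type} [CommRing R] [IsDomain R] [IsPrincipalIdealRing R]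
    {G : Type} [AddCommGroup G] [Module R G] (T : Theory R G)
    (n : ℕ) (X : Type) [TopologicalSpace X] : Prop :=
  ∃ o : ∀ x : X, T.Hrel X ({x}ᶜ) (n : ℤ),
    (∀ x, Submodule.span R {o x} = ⊤) ∧
    ∃ (ι : Type) (U : ι → Set X), (∀ i, IsOpen (U i)) ∧ (∀ x, ∃ i, x ∈ U i) ∧
      ∃ μ : ∀ i, T.Hrel X ((U i)ᶜ) (n : ℤ),
        ∀ (i) (x) (hx : x ∈ U i),
          T.hmap (ContinuousMap.id X)
            ((Set.mapsTo_id _).mono_right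
              (Set.compl_subset_compl.mpr (Set.singleton_subset_iff.mpr hx)))
            (n : ℤ) (μ i) = o x

/-- The full package: the (co)homology theories together with Poincaré–Lefschetz duality for
closed `R`-orientable topological `n`-manifolds (in the form of [Bredon, Cor. VI.8.4]: for a
closed subset `A ⊆ X` there is a commutative square consisting of the duality isomorphisms
`Ȟ^{n-k}(X;R) ≅ H_k(X;R)` and `Ȟ^{n-k}(A;R) ≅ H_k(X, X∖A;R)`, the restriction
`i^* : Ȟ^{n-k}(X;R) → Ȟ^{n-k}(A;R)` and `π_* : H_k(X;R) → H_k(X, X∖A;R)`), and the fact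
that every closed topological manifold is `R`-orientable when `2 = 0` in `R`. -/
structure GoodTheory (R : Type) [CommRing R] [IsDomain R] [IsPrincipalIdealRing R]
    (G : Type) [AddCommGroup G] [Module R G] extends Theory R G where
  /-- Poincaré–Lefschetz duality -/
  pd : ∀ (n : ℕ) (X : Type) [TopologicalSpace X] [T2Space X]
    [ChartedSpace (EuclideanSpace ℝ (Fin n)) X] [CompactSpace X],
    ROrientable toTheory n X →
    ∀ (k : ℤ) (A : Set X), IsClosed A →
      ∃ (pdX : Hcech X ((n : ℤ) - k) ≃+ Hrel X (∅ : Set X) k)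
        (pdA : Hcech (↥A) ((n : ℤ) - k) ≃+ Hrel X Aᶜ k),
        ∀ η : Hcech X ((n : ℤ) - k),
          pdA (ccmap (⟨Subtype.val, continuous_subtype_val⟩ : C(↥A, X)) ((n : ℤ) - k) η) =
          hmap (ContinuousMap.id X) (Set.mapsTo_empty _ _) k (pdX η)
  /-- every closed topological manifold is `R`-orientable if `2 = 0` in `R` -/
  orient_two : (2 : R) = 0 → ∀ (n : ℕ) (X : Type) [TopologicalSpace X] [T2Space X]
    [ChartedSpace (EuclideanSpace ℝ (Fin n)) X] [CompactSpace X],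
    ROrientable toTheory n X

/-- A (finite rank) vector bundle over the base `Y` with scalar field `𝕜`, packaged as a
structure: a model fibre `F` and a family of fibres `E y` together with all the data making
it a topological vector bundle. -/
structure VB (𝕜 : Type) [NontriviallyNormedField 𝕜] (Y : Type) [TopologicalSpace Y] :
    Type 1 where
  /-- the model fibre -/
  F : Type
  [nF : NormedAddCommGroup F]
  [sF : NormedSpace 𝕜 F]
  [fdF : FiniteDimensional 𝕜 F]
  /-- the fibres -/
  E : Y → Type
  [aE : ∀ y, AddCommGroup (E y)]
  [mE : ∀ y, Module 𝕜 (E y)]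
  [tE : ∀ y, TopologicalSpace (E y)]
  [tT : TopologicalSpace (Bundle.TotalSpace F E)]
  [fb : FiberBundle F E]
  [vb : VectorBundle 𝕜 F E]

attribute [instance] VB.nF VB.sF VB.fdF VB.aE VB.mE VB.tE VB.tT VB.fb VB.vb

/-- A morphism of vector bundles over `X`: a fibrewise (continuous) linear map which is
continuous as a map of total spaces. -/
def IsBundleMorphism {𝕜 : Type} [NontriviallyNormedField 𝕜] {X : Type} [TopologicalSpace X]
    (V W : VB 𝕜 X) (L : ∀ x, V.E x →L[𝕜] W.E x) : Prop :=
  Continuous fun p : Bundle.TotalSpace V.F V.E =>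
    (Bundle.TotalSpace.mk p.1 (L p.1 p.2) : Bundle.TotalSpace W.F W.E)

/-- The singular set `Σ(L) = {λ ∈ X | L_λ ∉ GL(E_λ, F_λ)}` of a bundle morphism `L`:
the set of points of the base over which `L` is not a linear isomorphism of fibres. -/
def singularSet {𝕜 : Type} [NontriviallyNormedField 𝕜] {X : Type} [TopologicalSpace X]
    (V W : VB 𝕜 X) (L : ∀ x, V.E x →L[𝕜] W.E x) : Set X :=
  {x : X | ¬ Function.Bijective (L x)}

/-- An `H^k(·;G)`-valued characteristic class `c`: it assigns to every vector bundle over a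
base `Y` a class `c(E) ∈ H^k(Y;G)`, such that `c(E₁) = f^* c(E₂)` whenever a continuous map
`f : Y → Z` is covered by a (fibrewise isomorphic, continuous) bundle map `E₁ → E₂`. -/
structure CharClass {R : Type} [CommRing R] [IsDomain R] [IsPrincipalIdealRing R]
    {G : Type} [AddCommGroup G] [Module R G] (T : GoodTheory R G)
    (𝕜 : Type) [NontriviallyNormedField 𝕜] (k : ℤ) where
  /-- the value of the characteristic class on a bundle -/
  cls : ∀ (Y : Type) [TopologicalSpace Y], VB 𝕜 Y → T.Hco Y k
  /-- naturality with respect to bundle maps covering continuous maps -/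
  natural : ∀ (Y Z : Type) [TopologicalSpace Y] [TopologicalSpace Z]
    (V : VB 𝕜 Y) (W : VB 𝕜 Z) (f : C(Y, Z)) (φ : ∀ y, V.E y ≃ₗ[𝕜] W.E (f y)),
    Continuous (fun p : Bundle.TotalSpace V.F V.E =>
      (Bundle.TotalSpace.mk (f p.1) (φ p.1 p.2) : Bundle.TotalSpace W.F W.E)) →
    cls Y V = T.cmap f k (cls Z W)

section AuxLemmas

theorem aux_bijective_iff_det_ne_zero {𝕜 M : Type} [Field 𝕜] [AddCommGroup M] [Module 𝕜 M]
    [FiniteDimensional 𝕜 M] (f : M →ₗ[𝕜] M) :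
    Function.Bijective f ↔ LinearMap.det f ≠ 0 := by
  classical
  constructor
  · intro h
    exact isUnit_iff_ne_zero.mp (LinearMap.isUnit_det f ((Module.End.isUnit_iff f).mpr h))
  · intro h
    set b := Module.finBasis 𝕜 M with hb
    have hA : IsUnit ((LinearMap.toMatrix b b f).det) := by
      rw [LinearMap.det_toMatrix]
      exact isUnit_iff_ne_zero.mpr h
    have hbij := (Matrix.toLinearEquiv b _ hA).bijective
    have hco : ⇑(Matrix.toLinearEquiv b (LinearMap.toMatrix b b f) hA) = ⇑f := by
      funext x
      rw [Matrix.toLinearEquiv_apply, Matrix.toLin_toMatrix]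
    rwa [hco] at hbij

theorem aux_isOpen_regular {𝕜 : Type} [RCLike 𝕜] {X : Type} [TopologicalSpace X]
    (V W : VB 𝕜 X) (hrank : Module.finrank 𝕜 V.F = Module.finrank 𝕜 W.F)
    (L : ∀ x, V.E x →L[𝕜] W.E x) (hL : IsBundleMorphism V W L) :
    IsOpen {x : X | Function.Bijective (L x)} := by
  classical
  rw [isOpen_iff_forall_mem_open]
  intro x₀ hx₀
  set e := trivializationAt V.F V.E x₀ with he
  set e' := trivializationAt W.F W.E x₀ with he'
  set U : Set X := e.baseSet ∩ e'.baseSet with hU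
  have hUopen : IsOpen U := e.open_baseSet.inter e'.open_baseSet
  have hx₀U : x₀ ∈ U :=
    ⟨FiberBundle.mem_baseSet_trivializationAt V.F V.E x₀,
      FiberBundle.mem_baseSet_trivializationAt W.F W.E x₀⟩
  set ψ : W.F ≃ₗ[𝕜] V.F := LinearEquiv.ofFinrankEq _ _ hrank.symm with hψ
  set b := Module.finBasis 𝕜 V.F with hb
  set w : Fin (Module.finrank 𝕜 V.F) → X → W.F :=
    fun j x => (e' (Bundle.TotalSpace.mk x (L x (e.symm x (b j))))).2 with hw
  have hwcont : ∀ j, ContinuousOn (w j) U := by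
    intro j
    have h1 : ContinuousOn
        (fun x => (Bundle.TotalSpace.mk x (e.symm x (b j)) : Bundle.TotalSpace V.F V.E))
        e.baseSet := by
      have := e.continuousOn_symm.comp
        (Continuous.continuousOn (s := e.baseSet) (continuous_id.prodMk continuous_const))
        (fun x hx => Set.mk_mem_prod hx (Set.mem_univ (b j)))
      exact this
    have h2 : ContinuousOn
        (fun x => (Bundle.TotalSpace.mk x (L x (e.symm x (b j))) : Bundle.TotalSpace W.F W.E))
        e.baseSet := hL.comp_continuousOn h1
    have h3 : ContinuousOn (fun x => e' (Bundle.TotalSpace.mk x (L x (e.symm x (b j))))) U := by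
      refine e'.continuousOn.comp (h2.mono Set.inter_subset_left) ?_
      intro x hx
      rw [e'.mem_source]
      exact hx.2
    exact continuous_snd.comp_continuousOn h3
  set g : X → 𝕜 := fun x => Matrix.det (Matrix.of fun i j => b.repr (ψ (w j x)) i) with hg
  have hgcont : ContinuousOn g U := by
    refine (continuous_id.matrix_det).comp_continuousOn ?_
    refine continuousOn_pi.mpr ?_
    intro i
    rw [continuousOn_pi]
    intro j
    have hφ : Continuous fun y : W.F => b.repr (ψ y) i :=
      LinearMap.continuous_of_finiteDimensional ((b.coord i).comp ψ.toLinearMap)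
    exact hφ.comp_continuousOn (hwcont j)
  have key : ∀ x ∈ U, (Function.Bijective (L x) ↔ g x ≠ 0) := by
    intro x hx
    set cle := e.continuousLinearEquivAt 𝕜 x hx.1 with hcle
    set cle' := e'.continuousLinearEquivAt 𝕜 x hx.2 with hcle'
    set f : V.F →ₗ[𝕜] V.F :=
      ψ.toLinearMap ∘ₗ cle'.toLinearEquiv.toLinearMap ∘ₗ (L x).toLinearMap ∘ₗ
        cle.symm.toLinearEquiv.toLinearMap with hf
    have hgx : g x = LinearMap.det f := by
      rw [← LinearMap.det_toMatrix b f]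
      have hM : (Matrix.of fun i j => b.repr (ψ (w j x)) i) = LinearMap.toMatrix b b f := by
        ext i j
        rw [LinearMap.toMatrix_apply, Matrix.of_apply]
        rfl
      simp only [hg]
      rw [hM]
    have hLf : Function.Bijective (L x) ↔ Function.Bijective f := by
      constructor
      · intro h
        have : ⇑f = ⇑ψ ∘ ⇑cle' ∘ ⇑(L x) ∘ ⇑cle.symm := rfl
        rw [this]
        exact ((ψ.bijective.comp cle'.bijective).comp h).comp cle.symm.bijective
      · intro h
        have hco : ⇑(L x) = ⇑cle'.symm ∘ ⇑ψ.symm ∘ ⇑f ∘ ⇑cle := by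
          funext y
          show L x y = cle'.symm (ψ.symm (ψ (cle' (L x (cle.symm (cle y))))))
          rw [cle.symm_apply_apply, ψ.symm_apply_apply, cle'.symm_apply_apply]
        rw [hco]
        exact ((cle'.symm.bijective.comp ψ.symm.bijective).comp h).comp cle.bijective
    rw [hLf, hgx, aux_bijective_iff_det_ne_zero]
  refine ⟨U ∩ g ⁻¹' {0}ᶜ, ?_, hgcont.isOpen_inter_preimage hUopen isOpen_compl_singleton,
    hx₀U, (key x₀ hx₀U).mp hx₀⟩
  intro x hx
  exact (key x hx.1).mpr hx.2

theorem aux_continuous_into_pullback {B B' Z F : Type} (E : B → Type)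
    [TopologicalSpace B'] [TopologicalSpace (Bundle.TotalSpace F E)] [TopologicalSpace Z]
    (f : B' → B) (g : Z → Bundle.TotalSpace F (f *ᵖ E))
    (h1 : Continuous fun z => (g z).proj)
    (h2 : Continuous (Bundle.Pullback.lift f ∘ g)) : Continuous g := by
  rw [continuous_iff_le_induced, Pullback.TotalSpace.topologicalSpace, pullbackTopology_def,
    induced_inf, induced_compose, induced_compose]
  exact le_inf (continuous_iff_le_induced.mp h1) (continuous_iff_le_induced.mp h2)

instance aux_pullback_addCommGroup {B B' : Type} (E : B → Type) [i : ∀ x, AddCommGroup (E x)]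
    (f : B' → B) (x : B') : AddCommGroup ((f *ᵖ E) x) := i (f x)

/-- The pullback of a vector bundle along a continuous map, as a `VB`. -/
def VB.pullbackVB {𝕜 : Type} [NontriviallyNormedField 𝕜] {X Y : Type} [TopologicalSpace X]
    [TopologicalSpace Y] (V : VB 𝕜 X) (f : C(Y, X)) : VB 𝕜 Y where
  F := V.F
  E := (f : Y → X) *ᵖ V.E
  nF := V.nF
  sF := V.sF
  fdF := V.fdF
  aE := fun y => inferInstanceAs (AddCommGroup (V.E (f y)))
  mE := fun y => inferInstanceAs (Module 𝕜 (V.E (f y)))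
  tE := fun y => inferInstance
  tT := inferInstance
  fb := inferInstance
  vb := by exact VectorBundle.pullback (F := V.F) (E := V.E) 𝕜 f

end AuxLemmas

/-- Let `R` be a principal ideal domain, `G` an `R`-module, `X` a closed
`R`-orientable topological manifold of dimension `n`, `E` and `F` real or complex vector
bundles over `X`, `L : E → F` a bundle morphism and `c` a characteristic class with values
in `H^k(·;G)`. If `c(E) - c(F) ∉ im β^k ⊆ H^k(X;G)`, then the covering dimension of the
singular set satisfies `dim Σ(L) ≥ n - k`. -/
theorem covDim_singularSet_ge
    {R : Type} [CommRing R] [IsDomain R] [IsPrincipalIdealRing R]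
    {G : Type} [AddCommGroup G] [Module R G] (T : GoodTheory R G)
    (𝕜 : Type) [RCLike 𝕜]
    (n : ℕ) (X : Type) [TopologicalSpace X] [T2Space X]
    [ChartedSpace (EuclideanSpace ℝ (Fin n)) X] [CompactSpace X]
    (hor : ROrientable T.toTheory n X)
    (V W : VB 𝕜 X) (hrank : Module.finrank 𝕜 V.F = Module.finrank 𝕜 W.F)
    (L : ∀ x, V.E x →L[𝕜] W.E x) (hL : IsBundleMorphism V W L)
    (k : ℤ) (c : CharClass T 𝕜 k)
    (hc : c.cls X V - c.cls X W ∉ Set.range (T.betaMap X k)) :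
    ((((n : ℤ) - k).toNat : ℕ∞)) ≤ covDim ↥(singularSet V W L) := by
  classical
  set A : Set X := singularSet V W L with hA
  by_cases hk : (n : ℤ) - k ≤ 0
  · rw [Int.toNat_of_nonpos hk]
    simpa using (zero_le (covDim ↥A))
  · push_neg at hk
    set m : ℕ := ((n : ℤ) - k).toNat with hmdef
    have hm : (m : ℤ) = (n : ℤ) - k := Int.toNat_of_nonneg (le_of_lt hk)
    have hset : Aᶜ = {x : X | Function.Bijective (L x)} := by
      ext x
      simp [hA, singularSet, not_not]
    have hAopen : IsOpen Aᶜ := by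
      rw [hset]; exact aux_isOpen_regular V W hrank L hL
    have hAclosed : IsClosed A := isOpen_compl_iff.mp hAopen
    haveI : CompactSpace ↥A := isCompact_iff_compactSpace.mp hAclosed.isCompact
    obtain ⟨pdX, pdA, hpd⟩ := T.pd n X hor k A hAclosed
    clear hpd
    clear pdX
    rw [show ((n : ℤ) - k) = ((m : ℕ) : ℤ) from hm.symm] at pdA
    refine T.dim_cech ↥A m ?_
    by_contra hcech
    push_neg at hcech
    have hzero : ∀ y : T.Hrel X Aᶜ k, y = 0 := by
      intro y
      have h1 := hcech (pdA.symm y)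
      calc y = pdA (pdA.symm y) := (pdA.apply_symm_apply y).symm
        _ = pdA 0 := by rw [h1]
        _ = 0 := map_zero _
    have h1 : c.cls ↥Aᶜ (V.pullbackVB (⟨Subtype.val, continuous_subtype_val⟩ : C(↥Aᶜ, X)))
        = T.cmap (⟨Subtype.val, continuous_subtype_val⟩ : C(↥Aᶜ, X)) k (c.cls X V) := by
      refine c.natural _ _ _ _ _ (fun y => LinearEquiv.refl 𝕜 _) ?_
      exact Pullback.continuous_lift V.F V.E _
    have h2 : c.cls ↥Aᶜ (W.pullbackVB (⟨Subtype.val, continuous_subtype_val⟩ : C(↥Aᶜ, X)))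
        = T.cmap (⟨Subtype.val, continuous_subtype_val⟩ : C(↥Aᶜ, X)) k (c.cls X W) := by
      refine c.natural _ _ _ _ _ (fun y => LinearEquiv.refl 𝕜 _) ?_
      exact Pullback.continuous_lift W.F W.E _
    have h3 : c.cls ↥Aᶜ (V.pullbackVB (⟨Subtype.val, continuous_subtype_val⟩ : C(↥Aᶜ, X)))
        = c.cls ↥Aᶜ (W.pullbackVB (⟨Subtype.val, continuous_subtype_val⟩ : C(↥Aᶜ, X))) := by
      have hbij : ∀ y : ↥Aᶜ, Function.Bijective (L y.1) := fun y => not_not.mp y.2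
      have hcont : Continuous (fun p : Bundle.TotalSpace V.F
            ((⇑(⟨Subtype.val, continuous_subtype_val⟩ : C(↥Aᶜ, X))) *ᵖ V.E) =>
          (Bundle.TotalSpace.mk p.1 ((L p.1.1) p.2) : Bundle.TotalSpace W.F
            ((⇑(⟨Subtype.val, continuous_subtype_val⟩ : C(↥Aᶜ, X))) *ᵖ W.E))) := by
        refine aux_continuous_into_pullback W.E
          (⇑(⟨Subtype.val, continuous_subtype_val⟩ : C(↥Aᶜ, X))) _ ?_ ?_
        · exact Pullback.continuous_proj V.F V.E
            (⇑(⟨Subtype.val, continuous_subtype_val⟩ : C(↥Aᶜ, X)))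
        · exact hL.comp (Pullback.continuous_lift V.F V.E
            (⇑(⟨Subtype.val, continuous_subtype_val⟩ : C(↥Aᶜ, X))))
      have hnat := c.natural ↥Aᶜ ↥Aᶜ
        (V.pullbackVB (⟨Subtype.val, continuous_subtype_val⟩ : C(↥Aᶜ, X)))
        (W.pullbackVB (⟨Subtype.val, continuous_subtype_val⟩ : C(↥Aᶜ, X)))
        (ContinuousMap.id ↥Aᶜ)
        (fun y => LinearEquiv.ofBijective (L y.1).toLinearMap (hbij y))
        (by exact hcont)
      rw [hnat, T.cmap_id]
    have hcmap : T.cmap (⟨Subtype.val, continuous_subtype_val⟩ : C(↥Aᶜ, X)) k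
        (c.cls X V - c.cls X W) = 0 := by
      rw [map_sub, ← h1, ← h2, h3, sub_self]
    have hpair : T.pair X k (c.cls X V - c.cls X W) = 0 := by
      apply LinearMap.ext
      intro ξ
      obtain ⟨ζ, hζ⟩ := (T.les_exact X A k ξ).mp (hzero _)
      rw [LinearMap.zero_apply]
      calc T.pair X k (c.cls X V - c.cls X W) ξ
          = T.pair X k (c.cls X V - c.cls X W)
            (T.hmap (⟨Subtype.val, continuous_subtype_val⟩ : C(↥Aᶜ, X))
              (Set.mapsTo_empty _ _) k ζ) := by rw [hζ]
        _ = T.pair ↥Aᶜ k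
            (T.cmap (⟨Subtype.val, continuous_subtype_val⟩ : C(↥Aᶜ, X)) k
              (c.cls X V - c.cls X W)) ζ :=
          (T.pair_natural _ k _ ζ).symm
        _ = 0 := by rw [hcmap, map_zero, LinearMap.zero_apply]
    exact hc ((T.uct_exact X k _).mp hpair)

end
end

section
/- Let X be a closed topological manifold of dimension n, E and F real vector bundles of the same fibre dimension over X, and L : E → F a bundle morphism. If the k-th Stiefel–Whitney classes differ, w_k(E) ≠ w_k(F) ∈ H^k(X;ℤ₂), then there exists a class in Ȟ^{n−k}(X;ℤ₂) restricting to a non-trivial class in Ȟ^{n−k}(Σ(L);ℤ₂); in particular, the covering dimension of Σ(L) is at least n − k. -/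
set_option autoImplicit false

noncomputable section

open Bundle Set Module

/-- Pullback of a packaged vector bundle along a continuous map. -/
def VB.pull {𝕜 : Type} [NontriviallyNormedField 𝕜] {X Y : Type} [TopologicalSpace X]
    [TopologicalSpace Y] (V : VB 𝕜 X) (f : C(Y, X)) : VB 𝕜 Y where
  F := V.F
  E := (f : Y → X) *ᵖ V.E
  aE := fun y => inferInstanceAs (AddCommGroup (V.E (f y)))
  mE := fun y => inferInstanceAs (Module 𝕜 (V.E (f y)))
  tE := fun y => inferInstanceAs (TopologicalSpace (V.E (f y)))
  tT := Pullback.TotalSpace.topologicalSpace V.F V.E (f : Y → X)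
  fb := by exact FiberBundle.pullback f
  vb := by exact VectorBundle.pullback (F := V.F) (E := V.E) 𝕜 f

theorem VB.continuous_pull_lift {𝕜 : Type} [NontriviallyNormedField 𝕜] {X Y : Type}
    [TopologicalSpace X] [TopologicalSpace Y] (V : VB 𝕜 X) (f : C(Y, X)) :
    Continuous fun p : Bundle.TotalSpace (V.pull f).F (V.pull f).E =>
      (Bundle.TotalSpace.mk (f p.1) ((LinearEquiv.refl 𝕜 (V.E (f p.1))) p.2) :
        Bundle.TotalSpace V.F V.E) :=
  Pullback.continuous_lift V.F V.E f

theorem isClosed_singularSet {X : Type} [TopologicalSpace X]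
    (V W : VB ℝ X) (hrank : Module.finrank ℝ V.F = Module.finrank ℝ W.F)
    (L : ∀ x, V.E x →L[ℝ] W.E x) (hL : IsBundleMorphism V W L) :
    IsClosed (singularSet V W L) := by
  rw [← isOpen_compl_iff, isOpen_iff_forall_mem_open]
  intro x₀ hx₀
  have hbij : Function.Bijective (L x₀) := not_not.mp hx₀
  obtain ⟨ψ⟩ : Nonempty (W.F ≃ₗ[ℝ] V.F) :=
    FiniteDimensional.nonempty_linearEquiv_of_finrank_eq hrank.symm
  let φ : W.F ≃L[ℝ] V.F := ψ.toContinuousLinearEquiv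
  set e := trivializationAt V.F V.E x₀ with he
  set f := trivializationAt W.F W.E x₀ with hf
  set U := e.baseSet ∩ f.baseSet with hUdef
  have hU : IsOpen U := e.open_baseSet.inter f.open_baseSet
  have hx₀U : x₀ ∈ U :=
    ⟨FiberBundle.mem_baseSet_trivializationAt' x₀, FiberBundle.mem_baseSet_trivializationAt' x₀⟩
  set g : X → (V.F →L[ℝ] V.F) := fun x =>
    (φ : W.F →L[ℝ] V.F) ∘L ((f.continuousLinearMapAt ℝ x) ∘L ((L x) ∘L (e.symmL ℝ x))) with hg
  have hgcont : ContinuousOn g U := by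
    rw [continuousOn_clm_apply]
    intro v
    have h1 : ContinuousOn (fun x : X => (Bundle.TotalSpace.mk x (e.symm x v) :
        Bundle.TotalSpace V.F V.E)) U := by
      refine (e.continuousOn_symm.comp
        ((continuous_id.prodMk continuous_const).continuousOn) ?_)
      exact fun x hx => ⟨hx.1, mem_univ v⟩
    have h2 : ContinuousOn (fun x : X => (Bundle.TotalSpace.mk x (L x (e.symm x v)) :
        Bundle.TotalSpace W.F W.E)) U := hL.comp_continuousOn h1
    have h3 : ContinuousOn (fun x : X =>
        (f (Bundle.TotalSpace.mk x (L x (e.symm x v)))).2) U := by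
      refine continuous_snd.comp_continuousOn (f.continuousOn.comp h2 ?_)
      exact fun x hx => f.mem_source.mpr hx.2
    refine ((φ.continuous.comp_continuousOn h3).congr ?_)
    intro x hx
    have : f.continuousLinearMapAt ℝ x (L x (e.symmL ℝ x v)) =
        (f (Bundle.TotalSpace.mk x (L x (e.symm x v)))).2 := by
      rw [← f.coe_continuousLinearEquivAt_eq hx.2]
      simp [Trivialization.symmL_apply, hx.1]
    simp only [hg, ContinuousLinearMap.comp_apply]
    rw [this]
    rfl
  have hiff : ∀ x ∈ U, (IsUnit (g x) ↔ Function.Bijective (L x)) := by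
    intro x hx
    set eX := e.continuousLinearEquivAt ℝ x hx.1 with heX
    set fX := f.continuousLinearEquivAt ℝ x hx.2 with hfX
    have hgx : ⇑(g x) = ⇑φ ∘ ⇑fX ∘ ⇑(L x) ∘ ⇑eX.symm := by
      funext w
      simp only [hg, ContinuousLinearMap.comp_apply, Function.comp_apply]
      rw [← f.coe_continuousLinearEquivAt_eq hx.2, ← e.symm_continuousLinearEquivAt_eq hx.1]
      rfl
    have hbijg : Function.Bijective (g x) ↔ Function.Bijective (L x) := by
      constructor
      · intro h
        have hLx : ⇑(L x) = ⇑fX.symm ∘ ⇑φ.symm ∘ ⇑(g x) ∘ ⇑eX := by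
          funext w
          simp [hgx]
        rw [hLx]
        exact fX.symm.bijective.comp (φ.symm.bijective.comp (h.comp eX.bijective))
      · intro h
        rw [hgx]
        exact φ.bijective.comp (fX.bijective.comp (h.comp eX.symm.bijective))
    exact (ContinuousLinearMap.isUnit_iff_bijective).trans hbijg
  refine ⟨U ∩ g ⁻¹' {u | IsUnit u}, ?_, ?_, ?_⟩
  · intro x hx
    simp only [mem_compl_iff, singularSet, mem_setOf_eq, not_not]
    exact (hiff x hx.1).mp hx.2
  · exact hgcont.isOpen_inter_preimage hU Units.isOpen
  · exact ⟨hx₀U, (hiff x₀ hx₀U).mpr hbij⟩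

/-- Let `X` be a closed topological manifold of dimension `n`, `E` and `F`
real vector bundles of the same fibre dimension over `X`, and `L : E → F` a bundle morphism.
If the `k`-th Stiefel–Whitney classes differ, `w_k(E) ≠ w_k(F) ∈ H^k(X;ℤ₂)`, then there
exists a class in `Ȟ^{n-k}(X;ℤ₂)` restricting to a non-trivial class in `Ȟ^{n-k}(Σ(L);ℤ₂)`;
in particular, the covering dimension of `Σ(L)` is at least `n - k`.
(The `k`-th Stiefel–Whitney class is here represented by an arbitrary `H^k(·;ℤ₂)`-valued
characteristic class `w`, since its only property used is naturality; every manifold is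
`ℤ₂`-orientable and, `ℤ₂` being a field, `im β^k = 0`, so the hypothesis `w_k(E) ≠ w_k(F)`
is equivalent to the universal-coefficient condition of the main theorem.) -/
theorem stiefelWhitney_ne_imp
    (T : GoodTheory (ZMod 2) (ZMod 2))
    (n : ℕ) (X : Type) [TopologicalSpace X] [T2Space X]
    [ChartedSpace (EuclideanSpace ℝ (Fin n)) X] [CompactSpace X]
    (V W : VB ℝ X) (hrank : Module.finrank ℝ V.F = Module.finrank ℝ W.F)
    (L : ∀ x, V.E x →L[ℝ] W.E x) (hL : IsBundleMorphism V W L)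
    (k : ℕ) (w : CharClass T ℝ (k : ℤ))
    (hw : w.cls X V ≠ w.cls X W) :
    (∃ η : T.Hcech X ((n : ℤ) - k),
      T.ccmap (⟨Subtype.val, continuous_subtype_val⟩ : C(↥(singularSet V W L), X))
        ((n : ℤ) - k) η ≠ 0) ∧
    ((n - k : ℕ) : ℕ∞) ≤ covDim ↥(singularSet V W L) := by
  classical
  haveI : Fact (Nat.Prime 2) := ⟨by norm_num⟩
  set A := singularSet V W L with hAdef
  have hAclosed : IsClosed A := isClosed_singularSet V W hrank L hL
  haveI : CompactSpace ↥A := isCompact_iff_compactSpace.mp hAclosed.isCompact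
  set c := w.cls X V - w.cls X W with hc
  have hc0 : c ≠ 0 := sub_ne_zero.mpr hw
  -- the Kronecker pairing against c is nonzero
  have hfree : Module.Free (ZMod 2) (T.Hrel X (∅ : Set X) ((k : ℤ) - 1)) := inferInstance
  have hpair : T.pair X (k : ℤ) c ≠ 0 := by
    intro h
    obtain ⟨z, hz⟩ := (T.uct_exact X (k : ℤ) c).mp h
    exact hc0 (by rw [← hz, T.uct_free X (k : ℤ) hfree z])
  obtain ⟨ξ, hξ⟩ : ∃ ξ, T.pair X (k : ℤ) c ξ ≠ 0 := by
    by_contra h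
    push_neg at h
    exact hpair (LinearMap.ext h)
  -- c restricts to zero on the complement of the singular set
  set jA : C(↥(Aᶜ), X) := ⟨Subtype.val, continuous_subtype_val⟩ with hjA
  have hnat1 : w.cls _ (V.pull jA) = T.cmap jA (k : ℤ) (w.cls X V) :=
    w.natural _ X (V.pull jA) V jA (fun y => LinearEquiv.refl ℝ (V.E (jA y)))
      (V.continuous_pull_lift jA)
  have hnat2 : w.cls _ (V.pull jA) = T.cmap jA (k : ℤ) (w.cls X W) := by
    refine w.natural _ X (V.pull jA) W jA
      (fun y => LinearEquiv.ofBijective (L (jA y)).toLinearMap (not_not.mp y.2)) ?_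
    exact hL.comp (Pullback.continuous_lift V.F V.E jA)
  have hres0 : T.cmap jA (k : ℤ) c = 0 := by
    rw [hc, map_sub, ← hnat1, ← hnat2, sub_self]
  -- orientability and Poincaré duality
  have hor : ROrientable T.toTheory n X := T.orient_two (by decide) n X
  obtain ⟨pdX, pdA, hcomm⟩ := T.pd n X hor (k : ℤ) A hAclosed
  -- the key class
  have hkey : T.ccmap (⟨Subtype.val, continuous_subtype_val⟩ : C(↥A, X)) ((n : ℤ) - k)
      (pdX.symm ξ) ≠ 0 := by
    intro h0
    have h1 : T.hmap (ContinuousMap.id X) (Set.mapsTo_empty _ _) (k : ℤ) ξ =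
        (0 : T.Hrel X Aᶜ (k : ℤ)) := by
      have h2 := hcomm (pdX.symm ξ)
      rw [h0, map_zero, pdX.apply_symm_apply] at h2
      exact h2.symm
    obtain ⟨ζ, hζ⟩ := (T.les_exact X A (k : ℤ) ξ).mp h1
    apply hξ
    rw [← hζ, ← T.pair_natural jA (k : ℤ) c ζ, hres0]
    simp
  refine ⟨⟨pdX.symm ξ, hkey⟩, ?_⟩
  rcases le_or_gt k n with hkn | hkn
  · have hiso : ((n : ℤ) - (k : ℤ)) = ((n - k : ℕ) : ℤ) := by omega
    have hex : ∃ x : T.Hcech ↥A (((n - k : ℕ) : ℤ)), x ≠ 0 := by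
      rw [← hiso]
      exact ⟨_, hkey⟩
    exact T.dim_cech ↥A (n - k) hex
  · rw [Nat.sub_eq_zero_of_le hkn.le]
    exact_mod_cast zero_le

end
end
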